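/- (Classical Korovkin theorem via P-statistical convergence.) Let P be a regular power series method, let a < b be reals, and let (T_j) be a sequence of positive linear operators from C[a,b] into C[a,b] such that st_P-lim_{j→∞} ‖T_j(e_i) − e_i‖ = 0 for i = 0, 1, 2, where e_i(x) = x^i and ‖·‖ is the sup norm on C[a,b]. Then for every ψ ∈ C[a,b], st_P-lim_{j→∞} ‖T_j(ψ) − ψ‖ = 0. -/

import Mathlib

open Filter Topology
open scoped ENNReal

/-- A power series method `P`: a sequence `(s j)` of nonnegative reals with `s 0 > 0`
whose power series `s(t) = ∑ s j * t ^ j` has radius of convergence `R`, `0 < R ≤ ∞`. -/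
structure PowerSeriesMethod where
  s : ℕ → ℝ
  s_nonneg : ∀ j, 0 ≤ s j
  s0_pos : 0 < s 0
  R : ℝ≥0∞
  R_pos : 0 < R
  summable_of_lt : ∀ t : ℝ, 0 < t → ENNReal.ofReal t < R → Summable fun j => s j * t ^ j
  not_summable_of_gt : ∀ t : ℝ, R < ENNReal.ofReal t → ¬ Summable fun j => s j * t ^ j

namespace PowerSeriesMethod

/-- The filter of `t` tending to `R` from the left (through `0 < t < R`);
if `R = ∞` this is `atTop`. -/
noncomputable def limFilter (P : PowerSeriesMethod) : Filter ℝ :=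
  if P.R = ⊤ then Filter.atTop else nhdsWithin P.R.toReal (Set.Ioo 0 P.R.toReal)

/-- `s(t) = ∑ s j t ^ j`. -/
noncomputable def sum (P : PowerSeriesMethod) (t : ℝ) : ℝ := ∑' j, P.s j * t ^ j

/-- The quotient `(∑_{j ∈ E} s j t ^ j) / s(t)` whose limit as `t → R⁻` is the `P`-density. -/
noncomputable def densityFn (P : PowerSeriesMethod) (E : Set ℕ) (t : ℝ) : ℝ :=
  (∑' j, Set.indicator E (fun j => P.s j * t ^ j) j) / P.sum t

/-- `E ⊆ ℕ` has `P`-density `d`. -/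
def HasDensity (P : PowerSeriesMethod) (E : Set ℕ) (d : ℝ) : Prop :=
  Tendsto (P.densityFn E) P.limFilter (𝓝 d)

/-- The power series method `P` is regular. -/
def Regular (P : PowerSeriesMethod) : Prop :=
  ∀ j, Tendsto (fun t => P.s j * t ^ j / P.sum t) P.limFilter (𝓝 0)

/-- The sequence `x` is `P`-statistically convergent to `L`. -/
def StatTendsto (P : PowerSeriesMethod) (x : ℕ → ℝ) (L : ℝ) : Prop :=
  ∀ ε : ℝ, 0 < ε → P.HasDensity {j | ε ≤ |x j - L|} 0

lemma eventually_good (P : PowerSeriesMethod) :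
    ∀ᶠ t in P.limFilter, 0 < t ∧ ENNReal.ofReal t < P.R := by
  unfold limFilter
  split_ifs with h
  · filter_upwards [eventually_gt_atTop (0:ℝ)] with t ht
    exact ⟨ht, h ▸ ENNReal.ofReal_lt_top⟩
  · filter_upwards [self_mem_nhdsWithin] with t ht
    refine ⟨ht.1, ?_⟩
    have h2 : ENNReal.ofReal t < ENNReal.ofReal P.R.toReal :=
      (ENNReal.ofReal_lt_ofReal_iff (ENNReal.toReal_pos P.R_pos.ne' h)).2 ht.2
    rwa [ENNReal.ofReal_toReal h] at h2

lemma sum_pos (P : PowerSeriesMethod) {t : ℝ} (ht : 0 < t) (hR : ENNReal.ofReal t < P.R) :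
    0 < P.sum t :=
  Summable.tsum_pos (P.summable_of_lt t ht hR)
    (fun j => mul_nonneg (P.s_nonneg j) (pow_nonneg ht.le j)) 0 (by simpa using P.s0_pos)

lemma hasDensityZero_of_subset_union3 (P : PowerSeriesMethod) {E A B C : Set ℕ}
    (hE : E ⊆ A ∪ B ∪ C) (hA : P.HasDensity A 0) (hB : P.HasDensity B 0)
    (hC : P.HasDensity C 0) : P.HasDensity E 0 := by
  have key : ∀ᶠ t in P.limFilter, 0 ≤ P.densityFn E t ∧
      P.densityFn E t ≤ P.densityFn A t + P.densityFn B t + P.densityFn C t := by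
    filter_upwards [P.eventually_good] with t ht
    obtain ⟨ht0, htR⟩ := ht
    set F : ℕ → ℝ := fun j => P.s j * t ^ j with hF
    have hFnn : ∀ j, 0 ≤ F j := fun j => mul_nonneg (P.s_nonneg j) (pow_nonneg ht0.le j)
    have hFs : Summable F := P.summable_of_lt t ht0 htR
    have hs : 0 < P.sum t := P.sum_pos ht0 htR
    have hnn : ∀ (S : Set ℕ) j, 0 ≤ S.indicator F j :=
      fun S j => Set.indicator_nonneg (fun i _ => hFnn i) j
    constructor
    · exact div_nonneg (tsum_nonneg (hnn E)) hs.le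
    · have hptwise : ∀ j, E.indicator F j ≤ A.indicator F j + B.indicator F j + C.indicator F j := by
        intro j
        by_cases hj : j ∈ E
        · rw [Set.indicator_of_mem hj]
          rcases hE hj with (h | h) | h
          · rw [Set.indicator_of_mem h]; have := hnn B j; have := hnn C j; linarith
          · rw [Set.indicator_of_mem (show j ∈ B from h)]
            have := hnn A j; have := hnn C j; linarith
          · rw [Set.indicator_of_mem (show j ∈ C from h)]
            have := hnn A j; have := hnn B j; linarith
        · rw [Set.indicator_of_notMem hj]
          have := hnn A j; have := hnn B j; have := hnn C j; linarith
      have hsum : (∑' j, E.indicator F j) ≤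
          (∑' j, A.indicator F j) + (∑' j, B.indicator F j) + (∑' j, C.indicator F j) := by
        have h1 : (∑' j, E.indicator F j) ≤ ∑' j, (A.indicator F j + B.indicator F j + C.indicator F j) :=
          Summable.tsum_le_tsum hptwise (hFs.indicator E)
            (((hFs.indicator A).add (hFs.indicator B)).add (hFs.indicator C))
        rwa [Summable.tsum_add ((hFs.indicator A).add (hFs.indicator B)) (hFs.indicator C),
          Summable.tsum_add (hFs.indicator A) (hFs.indicator B)] at h1
      unfold densityFn
      rw [← add_div, ← add_div]
      exact div_le_div_of_nonneg_right hsum hs.le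
  have hlim : Tendsto (fun t => P.densityFn A t + P.densityFn B t + P.densityFn C t)
      P.limFilter (𝓝 0) := by
    have := (hA.add hB).add hC
    simpa using this
  exact squeeze_zero' (key.mono fun t h => h.1) (key.mono fun t h => h.2) hlim

end PowerSeriesMethod

/-- The monomial `eₙ(x) = xⁿ` as an element of `C([a,b], ℝ)`. -/
noncomputable def monomial (a b : ℝ) (i : ℕ) : C(Set.Icc a b, ℝ) :=
  ⟨fun x => (x : ℝ) ^ i, by continuity⟩

lemma monomial_apply (a b : ℝ) (i : ℕ) (x : Set.Icc a b) : monomial a b i x = (x : ℝ) ^ i := rfl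

set_option maxHeartbeats 1600000 in
lemma exists_korovkin_bound (a b : ℝ) (hab : a < b) (f : C(Set.Icc a b, ℝ))
    {ε : ℝ} (hε : 0 < ε) :
    ∃ K : ℝ, 0 < K ∧ ∀ (T : C(Set.Icc a b, ℝ) →ₗ[ℝ] C(Set.Icc a b, ℝ)),
      (∀ g : C(Set.Icc a b, ℝ), 0 ≤ g → 0 ≤ T g) →
      ‖T f - f‖ ≤ ε + K * (‖T (monomial a b 0) - monomial a b 0‖ +
        ‖T (monomial a b 1) - monomial a b 1‖ + ‖T (monomial a b 2) - monomial a b 2‖) := by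
  have huc : UniformContinuous f := CompactSpace.uniformContinuous_of_continuous f.continuous
  rcases Metric.uniformContinuous_iff.mp huc ε hε with ⟨δ, hδ, hδε⟩
  set M : ℝ := max |a| |b| with hMdef
  have hM : 0 ≤ M := le_trans (abs_nonneg a) (le_max_left _ _)
  set c : ℝ := 2 * ‖f‖ / δ ^ 2 with hcdef
  have hc : 0 ≤ c := by positivity
  set K : ℝ := ε + c * (1 + 2 * M + M ^ 2) + ‖f‖ with hKdef
  have hKaux : (0:ℝ) ≤ c * (1 + 2 * M + M ^ 2) :=
    mul_nonneg hc (by have := sq_nonneg M; linarith)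
  have hK : 0 < K := by rw [hKdef]; linarith [norm_nonneg f]
  refine ⟨K, hK, fun T hTpos => ?_⟩
  set e0 := monomial a b 0
  set e1 := monomial a b 1
  set e2 := monomial a b 2
  set n0 := ‖T e0 - e0‖ with hn0def
  set n1 := ‖T e1 - e1‖ with hn1def
  set n2 := ‖T e2 - e2‖ with hn2def
  have hn0 : 0 ≤ n0 := norm_nonneg _
  have hn1 : 0 ≤ n1 := norm_nonneg _
  have hn2 : 0 ≤ n2 := norm_nonneg _
  have hC : 0 ≤ ε + K * (n0 + n1 + n2) := by positivity
  rw [ContinuousMap.norm_le _ hC]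
  intro x
  set xr : ℝ := (x : ℝ) with hxrdef
  have hx : |xr| ≤ M := abs_le_max_abs_abs x.2.1 x.2.2
  have hfx : |f x| ≤ ‖f‖ := by
    have := f.norm_coe_le_norm x; rwa [Real.norm_eq_abs] at this
  set g : C(Set.Icc a b, ℝ) := f - f x • e0 with hgdef
  set h : C(Set.Icc a b, ℝ) := ε • e0 + c • (e2 - (2 * xr) • e1 + xr ^ 2 • e0) with hhdef
  -- pointwise bound |g y| ≤ h y
  have hgh : ∀ y : Set.Icc a b, |g y| ≤ h y := by
    intro y
    have hgy : g y = f y - f x := by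
      simp [hgdef, e0, monomial_apply]
    have hhy : h y = ε + c * ((y : ℝ) - xr) ^ 2 := by
      simp [hhdef, e0, e1, e2, monomial_apply]
      ring
    rw [hgy, hhy]
    rcases lt_or_ge (dist y x) δ with hd | hd
    · have h1 : |f y - f x| < ε := by
        have := hδε hd
        rwa [Real.dist_eq] at this
      linarith [mul_nonneg hc (sq_nonneg ((y:ℝ) - xr))]
    · have hdist : dist y x = |(y : ℝ) - xr| := by
        rw [Subtype.dist_eq, Real.dist_eq]
      rw [hdist] at hd
      have hsq : δ ^ 2 ≤ ((y : ℝ) - xr) ^ 2 := by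
        have := sq_le_sq' (by linarith [abs_nonneg ((y:ℝ) - xr), neg_abs_le ((y:ℝ)-xr)] : -|(y:ℝ) - xr| ≤ δ) hd
        calc δ^2 ≤ |(y:ℝ) - xr|^2 := this
          _ = ((y:ℝ) - xr)^2 := sq_abs _
      have hcd : c * δ ^ 2 = 2 * ‖f‖ := by
        rw [hcdef]; field_simp
      have h2f : |f y - f x| ≤ 2 * ‖f‖ := by
        have hy : |f y| ≤ ‖f‖ := by
          have := f.norm_coe_le_norm y; rwa [Real.norm_eq_abs] at this
        calc |f y - f x| ≤ |f y| + |f x| := abs_sub _ _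
          _ ≤ 2 * ‖f‖ := by linarith
      have hmul : c * δ ^ 2 ≤ c * ((y:ℝ) - xr) ^ 2 := mul_le_mul_of_nonneg_left hsq hc
      linarith
  -- positivity: |T g x| ≤ T h x
  have habs : |(T g) x| ≤ (T h) x := by
    have h1 : (0 : C(Set.Icc a b, ℝ)) ≤ h - g := by
      rw [ContinuousMap.le_def]
      intro y
      have := hgh y
      have := abs_le.mp this
      simp only [ContinuousMap.zero_apply, ContinuousMap.sub_apply]
      linarith [this.2]
    have h2 : (0 : C(Set.Icc a b, ℝ)) ≤ h + g := by
      rw [ContinuousMap.le_def]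
      intro y
      have := abs_le.mp (hgh y)
      simp only [ContinuousMap.zero_apply, ContinuousMap.add_apply]
      linarith [this.1]
    have p1 := hTpos _ h1
    have p2 := hTpos _ h2
    rw [map_sub] at p1
    rw [map_add] at p2
    rw [ContinuousMap.le_def] at p1 p2
    have q1 := p1 x
    have q2 := p2 x
    simp only [ContinuousMap.zero_apply, ContinuousMap.sub_apply, ContinuousMap.add_apply] at q1 q2
    rw [abs_le]
    constructor <;> linarith
  -- evaluate
  set d0 : ℝ := (T e0 - e0) x with hd0def
  set d1 : ℝ := (T e1 - e1) x with hd1def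
  set d2 : ℝ := (T e2 - e2) x with hd2def
  have hd0 : |d0| ≤ n0 := by
    have := (T e0 - e0).norm_coe_le_norm x; rwa [Real.norm_eq_abs] at this
  have hd1 : |d1| ≤ n1 := by
    have := (T e1 - e1).norm_coe_le_norm x; rwa [Real.norm_eq_abs] at this
  have hd2 : |d2| ≤ n2 := by
    have := (T e2 - e2).norm_coe_le_norm x; rwa [Real.norm_eq_abs] at this
  have he0x : e0 x = 1 := by simp [e0, monomial_apply]
  have he1x : e1 x = xr := by simp [e1, monomial_apply, hxrdef]
  have he2x : e2 x = xr ^ 2 := by simp [e2, monomial_apply, hxrdef]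
  have hTe0 : (T e0) x = 1 + d0 := by
    simp only [hd0def, ContinuousMap.sub_apply, he0x]; ring
  have hTe1 : (T e1) x = xr + d1 := by
    simp only [hd1def, ContinuousMap.sub_apply, he1x]; ring
  have hTe2 : (T e2) x = xr ^ 2 + d2 := by
    simp only [hd2def, ContinuousMap.sub_apply, he2x]; ring
  have hTh : (T h) x = ε * (1 + d0) + c * (d2 - 2 * xr * d1 + xr ^ 2 * d0) := by
    have expand : T h = ε • T e0 + c • (T e2 - (2 * xr) • T e1 + xr ^ 2 • T e0) := by
      rw [hhdef]; simp [map_add, map_smul, map_sub]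
    rw [expand]
    simp only [ContinuousMap.add_apply, ContinuousMap.smul_apply, ContinuousMap.sub_apply,
      smul_eq_mul, hTe0, hTe1, hTe2]
    ring
  have hTfx : (T f - f) x = (T g) x + f x * d0 := by
    have hfeq : f = g + f x • e0 := by rw [hgdef]; abel
    have : T f = T g + f x • T e0 := by
      conv_lhs => rw [hfeq]
      rw [map_add, map_smul]
    simp only [ContinuousMap.sub_apply, this, ContinuousMap.add_apply,
      ContinuousMap.smul_apply, smul_eq_mul, hTe0]
    ring
  -- final estimate
  rw [Real.norm_eq_abs, hTfx]
  have hxle := abs_le.mp hx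
  have hd0le := abs_le.mp hd0
  have hd1le := abs_le.mp hd1
  have hd2le := abs_le.mp hd2
  have hThbound : (T h) x ≤ ε + (ε + c * M ^ 2) * n0 + (2 * c * M) * n1 + c * n2 := by
    rw [hTh]
    have b1 : ε * d0 ≤ ε * n0 := mul_le_mul_of_nonneg_left hd0le.2 hε.le
    have b2 : c * d2 ≤ c * n2 := mul_le_mul_of_nonneg_left hd2le.2 hc
    have habs1 : |xr * d1| ≤ M * n1 := by
      rw [abs_mul]
      exact mul_le_mul hx hd1 (abs_nonneg _) hM
    have b3' : c * (-(2 * xr * d1)) ≤ c * (2 * (M * n1)) := by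
      apply mul_le_mul_of_nonneg_left _ hc
      linarith [(abs_le.mp habs1).1]
    have hsqle : xr ^ 2 ≤ M ^ 2 := by
      calc xr^2 = |xr|^2 := (sq_abs _).symm
        _ ≤ M^2 := pow_le_pow_left₀ (abs_nonneg xr) hx 2
    have b4 : xr ^ 2 * d0 ≤ M ^ 2 * n0 := by
      calc xr ^ 2 * d0 ≤ xr ^ 2 * n0 := mul_le_mul_of_nonneg_left hd0le.2 (sq_nonneg xr)
        _ ≤ M ^ 2 * n0 := mul_le_mul_of_nonneg_right hsqle hn0
    have b4' : c * (xr ^ 2 * d0) ≤ c * (M ^ 2 * n0) := mul_le_mul_of_nonneg_left b4 hc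
    linarith [b3', b4']
  calc |(T g) x + f x * d0| ≤ |(T g) x| + |f x * d0| := abs_add_le _ _
    _ ≤ (T h) x + ‖f‖ * n0 := by
        have : |f x * d0| ≤ ‖f‖ * n0 := by
          rw [abs_mul]; exact mul_le_mul hfx hd0 (abs_nonneg _) (norm_nonneg f)
        linarith [habs]
    _ ≤ ε + K * (n0 + n1 + n2) := by
        have hcM : 0 ≤ c * M := mul_nonneg hc hM
        have hcM2 : 0 ≤ c * M ^ 2 := mul_nonneg hc (sq_nonneg M)
        have hF : 0 ≤ ‖f‖ := norm_nonneg f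
        have eK : c * (1 + 2 * M + M ^ 2) = c + 2 * (c * M) + c * M ^ 2 := by ring
        have k0 : (ε + c * M ^ 2 + ‖f‖) * n0 ≤ K * n0 :=
          mul_le_mul_of_nonneg_right (by rw [hKdef]; linarith [hc, hcM, hcM2, eK]) hn0
        have k1 : (2 * c * M) * n1 ≤ K * n1 :=
          mul_le_mul_of_nonneg_right (by rw [hKdef]; linarith [hc, hcM, hcM2, eK, hε, hF]) hn1
        have k2 : c * n2 ≤ K * n2 :=
          mul_le_mul_of_nonneg_right (by rw [hKdef]; linarith [hc, hcM, hcM2, eK, hε, hF]) hn2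
        have hexp : K * (n0 + n1 + n2) = K * n0 + K * n1 + K * n2 := by ring
        have hexp0 : (ε + c * M ^ 2 + ‖f‖) * n0 = (ε + c * M ^ 2) * n0 + ‖f‖ * n0 := by ring
        linarith [k0, k1, k2]

/-- classical Korovkin theorem via `P`-statistical convergence on `C[a,b]`. -/
theorem classical_korovkin_pstat (P : PowerSeriesMethod) (hP : P.Regular)
    (a b : ℝ) (hab : a < b)
    (T : ℕ → C(Set.Icc a b, ℝ) →ₗ[ℝ] C(Set.Icc a b, ℝ))
    (hTpos : ∀ j (f : C(Set.Icc a b, ℝ)), 0 ≤ f → 0 ≤ T j f)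
    (hTconv : ∀ i ∈ ({0, 1, 2} : Finset ℕ),
      P.StatTendsto (fun j => ‖T j (monomial a b i) - monomial a b i‖) 0) :
    ∀ f : C(Set.Icc a b, ℝ), P.StatTendsto (fun j => ‖T j f - f‖) 0 := by
  intro f ε hε
  obtain ⟨K, hK, hineq⟩ := exists_korovkin_bound a b hab f (half_pos hε)
  set η : ℝ := ε / (6 * K) with hη
  have hηpos : 0 < η := by positivity
  apply P.hasDensityZero_of_subset_union3
    (A := {j | η ≤ |(fun j => ‖T j (monomial a b 0) - monomial a b 0‖) j - 0|})
    (B := {j | η ≤ |(fun j => ‖T j (monomial a b 1) - monomial a b 1‖) j - 0|})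
    (C := {j | η ≤ |(fun j => ‖T j (monomial a b 2) - monomial a b 2‖) j - 0|})
  · intro j hj
    have hj' : ε ≤ ‖T j f - f‖ := by
      have : |(fun j => ‖T j f - f‖) j - 0| = ‖T j f - f‖ := by
        rw [sub_zero, abs_of_nonneg (norm_nonneg _)]
      rw [Set.mem_setOf_eq, this] at hj
      exact hj
    by_contra hc
    simp only [Set.mem_union, Set.mem_setOf_eq, sub_zero, not_or, not_le] at hc
    obtain ⟨⟨h0, h1⟩, h2⟩ := hc
    have a0 : ‖T j (monomial a b 0) - monomial a b 0‖ < η := (le_abs_self _).trans_lt h0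
    have a1 : ‖T j (monomial a b 1) - monomial a b 1‖ < η := (le_abs_self _).trans_lt h1
    have a2 : ‖T j (monomial a b 2) - monomial a b 2‖ < η := (le_abs_self _).trans_lt h2
    have hb := hineq (T j) (hTpos j)
    have hKη : K * (3 * η) = ε / 2 := by
      rw [hη]
      field_simp
      ring
    have hlt : K * (‖T j (monomial a b 0) - monomial a b 0‖ +
        ‖T j (monomial a b 1) - monomial a b 1‖ +
        ‖T j (monomial a b 2) - monomial a b 2‖) < K * (3 * η) :=
      mul_lt_mul_of_pos_left (by linarith) hK
    linarith
  · exact hTconv 0 (by decide) η hηpos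
  · exact hTconv 1 (by decide) η hηpos
  · exact hTconv 2 (by decide) η hηpos
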